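/- Let Φ∈ℝ^{M×N} be K^t-disjunct and let s∈ℝ^N be supported on a set K with |K|≤K. Let y = |Φs|² + w (entrywise squared absolute value) with ‖w‖₀ ≤ K₀ < t/2. Then for every index n∉K, the number of rows m with Φ_{m,n}≠0 and y_m = 0 is at least t+1−K₀. -/

import Mathlib

open Classical in
/-- For a `K^t`-disjunct sensing matrix, a `K`-sparse signal, and
measurements `y = |Φs|² + w` with at most `K₀ < t/2` outliers, every inactive index
`n ∉ 𝒦` has at least `t+1-K₀` rows `m` with `Φ m n ≠ 0` and `y m = 0`. -/
theorem stmt_1 (M N K t K₀ : ℕ) (Φ : Matrix (Fin M) (Fin N) ℝ)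
    (hdisj : ∀ n : Fin N, ∀ S : Finset (Fin N), n ∉ S → S.card ≤ K →
      t + 1 ≤ (Finset.univ.filter (fun m => Φ m n ≠ 0 ∧ ∀ k ∈ S, Φ m k = 0)).card)
    (s : Fin N → ℝ) (𝒦 : Finset (Fin N)) (hsupp : ∀ j, s j ≠ 0 → j ∈ 𝒦)
    (hcard : 𝒦.card ≤ K)
    (w y : Fin M → ℝ)
    (hw : (Finset.univ.filter (fun m => w m ≠ 0)).card ≤ K₀)
    (hK₀ : 2 * K₀ < t)
    (hy : ∀ m, y m = (Matrix.mulVec Φ s m) ^ 2 + w m)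
    (n : Fin N) (hn : n ∉ 𝒦) :
    t + 1 - K₀ ≤ (Finset.univ.filter (fun m => Φ m n ≠ 0 ∧ y m = 0)).card := by
  classical
  set A := Finset.univ.filter (fun m => Φ m n ≠ 0 ∧ ∀ k ∈ 𝒦, Φ m k = 0) with hA
  set W := Finset.univ.filter (fun m : Fin M => w m ≠ 0) with hW
  have hAcard : t + 1 ≤ A.card := hdisj n 𝒦 hn hcard
  have hsub : A \ W ⊆ Finset.univ.filter (fun m => Φ m n ≠ 0 ∧ y m = 0) := by
    intro m hm
    simp only [hA, hW, Finset.mem_sdiff, Finset.mem_filter, Finset.mem_univ, true_and,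
      not_not] at hm ⊢
    obtain ⟨⟨hΦn, hzero⟩, hwm⟩ := hm
    refine ⟨hΦn, ?_⟩
    have hmv : Matrix.mulVec Φ s m = 0 := by
      unfold Matrix.mulVec dotProduct
      apply Finset.sum_eq_zero
      intro k _
      by_cases hk : s k = 0
      · simp [hk]
      · simp [hzero k (hsupp k hk)]
    rw [hy m, hmv, hwm]; ring
  have h1 : A.card ≤ (A \ W).card + W.card := Finset.card_le_card_sdiff_add_card
  have h2 : (A \ W).card ≤ _ := Finset.card_le_card hsub
  omega
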